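/- Let (X, μ) be a measure space with a ball-basis ℬ. If E ⊂ X is bounded (contained in some ball) and 𝒢 ⊂ ℬ is a family of balls covering E, then there exists a finite or countable sequence of pairwise disjoint balls Gₖ ∈ 𝒢 such that E ⊂ ∪ₖ Gₖ*. -/

import Mathlib

open MeasureTheory Set ENNReal NNReal

/-- A ball-basis on a measure space `(X, μ)`: a family of measurable sets of positive
finite measure satisfying conditions B1)-B4) of Karagulyan. -/
structure BallBasis (X : Type*) [MeasurableSpace X] (μ : Measure X) where
  balls : Set (Set X)
  K : ℝ≥0
  K_pos : 0 < K
  measurableSet : ∀ B ∈ balls, MeasurableSet B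
  measure_pos : ∀ B ∈ balls, 0 < μ B
  measure_lt_top : ∀ B ∈ balls, μ B < ∞
  exists_ball : ∀ x y : X, ∃ B ∈ balls, x ∈ B ∧ y ∈ B
  approx : ∀ E : Set X, MeasurableSet E → ∀ ε : ℝ≥0∞, 0 < ε →
      ∃ Bs : ℕ → Set X, (∀ k, Bs k ∈ balls) ∧ μ (symmDiff E (⋃ k, Bs k)) < ε
  hull : Set X → Set X
  hull_mem : ∀ B ∈ balls, hull B ∈ balls
  star_subset_hull : ∀ B ∈ balls,
      (⋃₀ {A | A ∈ balls ∧ μ A ≤ 2 * μ B ∧ (A ∩ B).Nonempty}) ⊆ hull B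
  measure_hull_le : ∀ B ∈ balls, μ (hull B) ≤ (K : ℝ≥0∞) * μ B

namespace BallBasis

variable {X : Type*} [MeasurableSpace X] {μ : Measure X}

/-- `B* = ⋃ {A ∈ ℬ : μ A ≤ 2 μ B, A ∩ B ≠ ∅}`. -/
def star (ℬ : BallBasis X μ) (B : Set X) : Set X :=
  ⋃₀ {A | A ∈ ℬ.balls ∧ μ A ≤ 2 * μ B ∧ (A ∩ B).Nonempty}

/-- The doubling condition for a ball-basis, with doubling constant `η`. -/
def Doubling (ℬ : BallBasis X μ) (η : ℝ≥0) : Prop :=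
  ∀ B ∈ ℬ.balls, ℬ.star B ≠ univ →
    ∃ B' ∈ ℬ.balls, B ⊂ B' ∧ μ B' ≤ (η : ℝ≥0∞) * μ B

end BallBasis

/-- Vitali-type covering lemma: a bounded set covered by a family of balls is covered by
the `star`s of a countable pairwise disjoint subfamily. -/
theorem exists_disjoint_subfamily_covering_star {X : Type*} [MeasurableSpace X]
    {μ : Measure X} (ℬ : BallBasis X μ) {E : Set X} (hE : ∃ B ∈ ℬ.balls, E ⊆ B)
    {𝒢 : Set (Set X)} (h𝒢 : 𝒢 ⊆ ℬ.balls) (hcov : E ⊆ ⋃₀ 𝒢) :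
    ∃ 𝒢' ⊆ 𝒢, 𝒢'.Countable ∧ 𝒢'.PairwiseDisjoint id ∧ E ⊆ ⋃ G ∈ 𝒢', ℬ.star G := by
  obtain ⟨B₀, hB₀, hEB₀⟩ := hE
  -- restrict to balls meeting E
  set t : Set (Set X) := {G ∈ 𝒢 | (G ∩ E).Nonempty} with ht
  have htsub : t ⊆ 𝒢 := fun G hG => hG.1
  have hcov' : E ⊆ ⋃₀ t := by
    intro x hx
    obtain ⟨G, hG, hxG⟩ := hcov hx
    exact ⟨G, ⟨hG, ⟨x, hxG, hx⟩⟩, hxG⟩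
  have hmeetsB₀ : ∀ G ∈ t, (G ∩ B₀).Nonempty := by
    intro G hG
    obtain ⟨x, hxG, hxE⟩ := hG.2
    exact ⟨x, hxG, hEB₀ hxE⟩
  by_cases hbig : ∃ G ∈ t, μ B₀ ≤ 2 * μ G
  · obtain ⟨G, hGt, hμ⟩ := hbig
    refine ⟨{G}, singleton_subset_iff.2 (htsub hGt), countable_singleton _,
      pairwiseDisjoint_singleton _ _, ?_⟩
    have : B₀ ⊆ ℬ.star G := by
      intro x hx
      exact ⟨B₀, ⟨hB₀, hμ, (hmeetsB₀ G hGt).imp fun y hy => ⟨hy.2, hy.1⟩⟩, hx⟩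
    simpa using hEB₀.trans this
  push_neg at hbig
  -- all balls in t have measure less than μ B₀, apply Vitali
  have hlt : ∀ G ∈ t, μ G < μ B₀ := by
    intro G hG
    have h2 := hbig G hG
    calc μ G ≤ 2 * μ G := by
            nth_rewrite 1 [← one_mul (μ G)]
            exact mul_le_mul_left one_le_two _
      _ < μ B₀ := h2
  have hB₀fin : μ B₀ ≠ ∞ := (ℬ.measure_lt_top B₀ hB₀).ne
  have hGfin : ∀ G ∈ t, μ G ≠ ∞ := fun G hG => (hlt G hG).trans (ℬ.measure_lt_top B₀ hB₀) |>.ne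
  obtain ⟨u, hut, hdisj, hVit⟩ := Vitali.exists_disjoint_subfamily_covering_enlargement
    (id : Set X → Set X) t (fun G => (μ G).toReal) 2 one_lt_two
    (fun a _ => ENNReal.toReal_nonneg) (μ B₀).toReal
    (fun a ha => ENNReal.toReal_le_toReal (hGfin a ha) hB₀fin |>.2 (hlt a ha).le)
    (fun a ha => nonempty_of_measure_ne_zero (ℬ.measure_pos a (h𝒢 (htsub ha))).ne')
  refine ⟨u, hut.trans htsub, ?_, hdisj, ?_⟩
  · -- countability: all balls of u lie in hull B₀, which has finite measure
    have hsubhull : ∀ G ∈ u, G ⊆ ℬ.hull B₀ := by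
      intro G hG
      refine (subset_sUnion_of_mem ?_).trans (ℬ.star_subset_hull B₀ hB₀)
      exact ⟨h𝒢 (htsub (hut hG)), (hlt G (hut hG)).le.trans (by
        nth_rewrite 1 [← one_mul (μ B₀)]
        exact mul_le_mul_left one_le_two _), hmeetsB₀ G (hut hG)⟩
    have hfin : μ (⋃ G : u, (G : Set X)) ≠ ∞ := by
      have h1 : (⋃ G : u, (G : Set X)) ⊆ ℬ.hull B₀ := iUnion_subset fun G => hsubhull G G.2
      have h2 : μ (ℬ.hull B₀) < ∞ := lt_of_le_of_lt (ℬ.measure_hull_le B₀ hB₀)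
        (ENNReal.mul_lt_top coe_lt_top (ℬ.measure_lt_top B₀ hB₀))
      exact ((measure_mono h1).trans_lt h2).ne
    have hcnt := MeasureTheory.Measure.countable_meas_pos_of_disjoint_of_meas_iUnion_ne_top μ
      (As := fun G : u => (G : Set X))
      (fun G => ℬ.measurableSet G (h𝒢 (htsub (hut G.2))))
      (fun a b hab => hdisj a.2 b.2 (Subtype.coe_ne_coe.2 hab)) hfin
    have : u = Subtype.val '' {G : u | 0 < μ (G : Set X)} := by
      ext G
      constructor
      · intro hG
        exact ⟨⟨G, hG⟩, ℬ.measure_pos G (h𝒢 (htsub (hut hG))), rfl⟩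
      · rintro ⟨⟨G, hG⟩, -, rfl⟩; exact hG
    rw [this]
    exact hcnt.image _
  · -- covering
    intro x hx
    obtain ⟨G, hGt, hxG⟩ := hcov' hx
    obtain ⟨b, hbu, hint, hle⟩ := hVit G hGt
    have hμle : μ G ≤ 2 * μ b := by
      have hbfin := hGfin b (hut hbu)
      rw [← ENNReal.ofReal_toReal (hGfin G hGt), ← ENNReal.ofReal_toReal hbfin]
      calc ENNReal.ofReal (μ G).toReal ≤ ENNReal.ofReal (2 * (μ b).toReal) :=
            ENNReal.ofReal_le_ofReal hle
        _ = 2 * ENNReal.ofReal (μ b).toReal := by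
            rw [ENNReal.ofReal_mul (by norm_num)]; norm_num
    have : G ⊆ ℬ.star b := fun y hy =>
      ⟨G, ⟨h𝒢 (htsub hGt), hμle, hint⟩, hy⟩
    exact mem_biUnion hbu (this hxG)
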